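/- For every n and every ω ∈ Ω_n = {0,1,2}^n, the three-type evolution step commutes with the projection Π_1 in the sense that Π_1(Z(ω)) = Z^{(2)}(Π_1(ω)). -/
import Mathlib


open MeasureTheory ProbabilityTheory Filter Topology

namespace TASEP

/-- Extension of a string `ω ∈ {0,1,2}ⁿ` to all integer indices (0-based), with the
boundary convention that out-of-range entries on the left are `2` and on the right are `0`
(so that the boundary inequalities in the update rule are automatically satisfied, and
no out-of-range pair is ever swapped). -/
def extStr (n : ℕ) (ω : Fin n → Fin 3) (i : ℤ) : Fin 3 :=
  if h : 0 ≤ i ∧ i < n then ω ⟨i.toNat, by omega⟩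
  else if i < 0 then 2 else 0

/-- The (1-based) `i`-th entry of the string `ω`. -/
def entry (n : ℕ) (ω : Fin n → Fin 3) (i : ℕ) : Fin 3 := extStr n ω ((i : ℤ) - 1)

/-- Whether the (0-based) pair of positions `(i, i+1)` is swapped by the three-type
evolution step: either the generic rule `ω_{i-1} ≥ ω_i < ω_{i+1} ≥ ω_{i+2}` (out-of-range
inequalities considered satisfied), or the priority rule: in the pattern `012` the pair
`12` swaps (into `021`). -/
def swapPair (n : ℕ) (ω : Fin n → Fin 3) (i : ℤ) : Bool :=
  decide ((extStr n ω i < extStr n ω (i+1) ∧ extStr n ω i ≤ extStr n ω (i-1) ∧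
      extStr n ω (i+2) ≤ extStr n ω (i+1))
    ∨ (extStr n ω (i-1) = 0 ∧ extStr n ω i = 1 ∧ extStr n ω (i+1) = 2))

/-- The three-type parallel evolution step `Z` on `{0,1,2}ⁿ`. -/
def Zstep (n : ℕ) (ω : Fin n → Fin 3) : Fin n → Fin 3 := fun j =>
  if swapPair n ω j then extStr n ω ((j : ℤ) + 1)
  else if swapPair n ω ((j : ℤ) - 1) then extStr n ω ((j : ℤ) - 1)
  else ω j

/-- Whether the (0-based) pair `(i, i+1)` forms the pattern `02` (two-type step). -/
def swapPair2 (n : ℕ) (ω : Fin n → Fin 3) (i : ℤ) : Bool :=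
  decide (extStr n ω i = 0 ∧ extStr n ω (i+1) = 2)

/-- The two-type parallel evolution step `Z⁽²⁾`, replacing every occurrence of the
substring `02` by `20` (strings over `{0,2}` are realized inside `{0,1,2}ⁿ`). -/
def Z2step (n : ℕ) (ω : Fin n → Fin 3) : Fin n → Fin 3 := fun j =>
  if swapPair2 n ω j then extStr n ω ((j : ℤ) + 1)
  else if swapPair2 n ω ((j : ℤ) - 1) then extStr n ω ((j : ℤ) - 1)
  else ω j

/-- Stabilization time of `ω` under repeated application of the step `Zf`:
`min {k ≥ 0 : Zf^[k] ω = Zf^[k+1] ω}` (`sInf`, which is `0` if no such `k` exists). -/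
noncomputable def stabTime (n : ℕ) (Zf : (Fin n → Fin 3) → (Fin n → Fin 3))
    (ω : Fin n → Fin 3) : ℕ :=
  sInf {k | Zf^[k] ω = Zf^[k + 1] ω}

/-- The two-type stabilization time `T_n^{(2)}`. -/
noncomputable def T2 (n : ℕ) (ω : Fin n → Fin 3) : ℕ := stabTime n (Z2step n) ω

/-- The three-type stabilization time `T_n`. -/
noncomputable def T3 (n : ℕ) (ω : Fin n → Fin 3) : ℕ := stabTime n (Zstep n) ω

/-- The projection `Π₁`, replacing each `1` by `0`. -/
def proj1 (n : ℕ) (ω : Fin n → Fin 3) : Fin n → Fin 3 := fun j => if ω j = 2 then 2 else 0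

/-- The excess `E_n(ω) = T_n(ω) - T_n^{(2)}(Π₁ ω)` (as an integer). -/
noncomputable def excess (n : ℕ) (ω : Fin n → Fin 3) : ℤ :=
  (T3 n ω : ℤ) - (T2 n (proj1 n ω) : ℤ)

/-- The Bernoulli measure on one letter: `2` with probability `p`, `0` with
probability `1 - p`. -/
noncomputable def bern3 (p : ℝ) : Measure (Fin 3) :=
  ENNReal.ofReal (1 - p) • Measure.dirac 0 + ENNReal.ofReal p • Measure.dirac 2

/-- The Bernoulli product measure of parameter `p` on strings of length `n`
(supported on two-type strings `{0,2}ⁿ`). -/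
noncomputable def bernString (n : ℕ) (p : ℝ) : Measure (Fin n → Fin 3) :=
  Measure.pi fun _ => bern3 p

def pi3 (x : Fin 3) : Fin 3 := if x = 2 then 2 else 0

def swapP (a b c d : Fin 3) : Bool :=
  decide ((b < c ∧ b ≤ a ∧ d ≤ c) ∨ (a = 0 ∧ b = 1 ∧ c = 2))

def swapP2 (b c : Fin 3) : Bool := decide (b = 0 ∧ c = 2)

theorem key : ∀ a b c d e : Fin 3,
    pi3 (if swapP b c d e then d else if swapP a b c d then b else c) =
    (if swapP2 (pi3 c) (pi3 d) then pi3 d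
     else if swapP2 (pi3 b) (pi3 c) then pi3 b else pi3 c) := by decide

lemma swapPair_eq (n : ℕ) (ω : Fin n → Fin 3) (i : ℤ) :
    swapPair n ω i = swapP (extStr n ω (i-1)) (extStr n ω i) (extStr n ω (i+1))
      (extStr n ω (i+2)) := rfl

lemma swapPair2_eq (n : ℕ) (ω : Fin n → Fin 3) (i : ℤ) :
    swapPair2 n ω i = swapP2 (extStr n ω i) (extStr n ω (i+1)) := rfl

lemma extStr_proj1 (n : ℕ) (ω : Fin n → Fin 3) (i : ℤ) :
    extStr n (proj1 n ω) i = pi3 (extStr n ω i) := by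
  unfold extStr proj1 pi3
  split_ifs <;> simp_all

lemma extStr_fin (n : ℕ) (ω : Fin n → Fin 3) (j : Fin n) :
    extStr n ω (j : ℤ) = ω j := by
  have h : (0:ℤ) ≤ (j:ℤ) ∧ (j:ℤ) < n := ⟨Int.ofNat_nonneg _, by exact_mod_cast j.isLt⟩
  rw [extStr, dif_pos h]
  congr

/-- For every `n` and every `ω ∈ {0,1,2}ⁿ`, the three-type evolution step
commutes with the projection `Π₁`: `Π₁(Z ω) = Z⁽²⁾(Π₁ ω)`. -/
theorem proj1_Zstep_comm (n : ℕ) (ω : Fin n → Fin 3) :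
    proj1 n (Zstep n ω) = Z2step n (proj1 n ω) := by
  funext j
  show pi3 (Zstep n ω j) = Z2step n (proj1 n ω) j
  unfold Zstep Z2step
  rw [swapPair_eq, swapPair_eq, swapPair2_eq, swapPair2_eq]
  simp only [extStr_proj1]
  rw [← extStr_fin n ω j]
  have hp : proj1 n ω j = pi3 (extStr n ω (j : ℤ)) := by rw [extStr_fin]; rfl
  rw [hp]
  have h1 : (j:ℤ) - 1 + 1 = (j:ℤ) := by ring
  have h2 : (j:ℤ) - 1 + 2 = (j:ℤ) + 1 := by ring
  rw [h1, h2]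
  exact key _ _ _ _ _


end TASEP
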